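/- Define synaptic weights W : ℕ × ℕ → ℝ (indices i ≥ 1) by W_{i,i+1} = −i, W_{ij} = 1 for i+2 ≤ j ≤ 2i, and W_{ij} = 0 otherwise. Then: (1) for every i ≥ 1, ∑_{j≠i} max(W_{ij}, 0) = i − 1 < i = ∑_{j≠i} max(−W_{ij}, 0), so condition (A) holds; (2) for every i ≥ 2, ∑_{j≠i} |W_{ji}| ≥ i − 1; in particular sup_i ∑_{j≠i} |W_{ji}| = ∞, so the Dobrushin condition fails. -/
import Mathlib

theorem example2_condition_A_not_Dobrushin
    (W : ℕ → ℕ → ℝ)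
    (hW : ∀ i j, W i j =
      if j = i + 1 then -(i : ℝ) else if i + 2 ≤ j ∧ j ≤ 2 * i then 1 else 0) :
    (∀ i : ℕ, 1 ≤ i →
      (∑' j : {j : ℕ // j ≠ i}, max (W i j.1) 0) = (i : ℝ) - 1 ∧
      (∑' j : {j : ℕ // j ≠ i}, max (-(W i j.1)) 0) = (i : ℝ) ∧
      (∑' j : {j : ℕ // j ≠ i}, max (W i j.1) 0) <
        (∑' j : {j : ℕ // j ≠ i}, max (-(W i j.1)) 0)) ∧
    (∀ i : ℕ, 2 ≤ i →
      (i : ℝ) - 1 ≤ ∑' j : {j : ℕ // j ≠ i}, |W j.1 i|) ∧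
    ¬ BddAbove (Set.range fun i : ℕ => ∑' j : {j : ℕ // j ≠ i}, |W j.1 i|) := by
  have key2 : ∀ i : ℕ, 2 ≤ i → (i : ℝ) - 1 ≤ ∑' j : {j : ℕ // j ≠ i}, |W j.1 i| := by
    intro i hi
    have hs : Summable (fun j : ℕ => |W j i|) := by
      apply summable_of_ne_finset_zero (s := Finset.range i)
      intro b hb
      simp only [Finset.mem_range, not_lt] at hb
      rw [hW]
      rw [if_neg (by omega), if_neg (by omega)]
      simp
    have hsum : Summable (fun j : {j : ℕ // j ≠ i} => |W j.1 i|) :=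
      hs.subtype {j | j ≠ i}
    have hle := Summable.le_tsum hsum ⟨i - 1, by omega⟩ (fun b _ => abs_nonneg _)
    have hval : |W (i - 1) i| = (i : ℝ) - 1 := by
      rw [hW, if_pos (by omega), abs_neg, abs_of_nonneg (by positivity)]
      have : ((i - 1 : ℕ) : ℝ) = (i : ℝ) - 1 := by
        have := Nat.cast_sub (le_trans (by norm_num) hi) (R := ℝ) (n := i) (m := 1)
        simpa using this
      exact this
    rw [hval] at hle
    exact hle
  refine ⟨?_, key2, ?_⟩
  · intro i hi
    have h1 : (∑' j : {j : ℕ // j ≠ i}, max (W i j.1) 0) = (i : ℝ) - 1 := by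
      have hcoe : (∑' j : {j : ℕ // j ≠ i}, max (W i j.1) 0)
          = ∑' j : ({j : ℕ | j ≠ i} : Set ℕ), max (W i j.1) 0 := rfl
      rw [hcoe, tsum_subtype {j : ℕ | j ≠ i} (fun j => max (W i j) 0)]
      rw [tsum_eq_sum (s := Finset.Icc (i + 2) (2 * i))
        (f := fun j => ({j : ℕ | j ≠ i}).indicator (fun j => max (W i j) 0) j)]
      · have : ∀ b ∈ Finset.Icc (i + 2) (2 * i),
            ({j : ℕ | j ≠ i}).indicator (fun j => max (W i j) 0) b = 1 := by
          intro b hb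
          simp only [Finset.mem_Icc] at hb
          rw [Set.indicator_of_mem (by simp only [Set.mem_setOf_eq]; omega)]
          rw [hW, if_neg (by omega), if_pos ⟨hb.1, hb.2⟩]
          norm_num
        rw [Finset.sum_congr rfl this, Finset.sum_const, Nat.card_Icc]
        have : (2 * i + 1 - (i + 2)) = i - 1 := by omega
        rw [this]
        rw [nsmul_eq_mul, Nat.cast_sub hi]
        ring
      · intro b hb
        simp only [Finset.mem_Icc, not_and, not_le] at hb
        by_cases hbi : b = i
        · rw [Set.indicator_of_notMem (by simp [hbi])]
        · rw [Set.indicator_of_mem (by simpa using hbi)]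
          rw [hW]
          by_cases hb1 : b = i + 1
          · rw [if_pos hb1]
            have : -(i : ℝ) ≤ 0 := neg_nonpos.mpr (Nat.cast_nonneg i)
            simp [max_eq_right this]
          · rw [if_neg hb1, if_neg (by omega)]
            simp
    have h2 : (∑' j : {j : ℕ // j ≠ i}, max (-(W i j.1)) 0) = (i : ℝ) := by
      rw [tsum_eq_single (⟨i + 1, by omega⟩ : {j : ℕ // j ≠ i})]
      · rw [hW, if_pos rfl, neg_neg]
        exact max_eq_left (by positivity)
      · intro b hb
        have hb1 : b.1 ≠ i + 1 := fun h => hb (Subtype.ext h)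
        rw [hW, if_neg hb1]
        by_cases h : i + 2 ≤ b.1 ∧ b.1 ≤ 2 * i
        · rw [if_pos h]; norm_num
        · rw [if_neg h]; norm_num
    refine ⟨h1, h2, ?_⟩
    rw [h1, h2]
    linarith
  · rintro ⟨M, hM⟩
    obtain ⟨n, hn⟩ := exists_nat_gt (M + 1)
    have h2le : 2 ≤ n + 2 := by omega
    have := key2 (n + 2) h2le
    have hMle : (∑' j : {j : ℕ // j ≠ n + 2}, |W j.1 (n + 2)|) ≤ M :=
      hM ⟨n + 2, rfl⟩
    push_cast at this
    linarith
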